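/- Consider an IIA social choice function on 3 alternatives a,b,c and 2 voters, given by pairwise functions f^{a>b}, f^{b>c}, f^{c>a} : {-1,1}² → {-1,1}. If voter 1 is pivotal for f^{a>b} and voter 2 is pivotal for f^{b>c}, then there exists a profile of transitive individual rankings for which the outcome (f^{a>b}(x^{a>b}), f^{b>c}(x^{b>c}), f^{c>a}(x^{c>a})) equals (1,1,1) or (-1,-1,-1), i.e., is non-transitive. -/

import Mathlib

/-- Voter `j` is pivotal for `f` if flipping coordinate `j` can change the value. -/
def Pivotal {n : ℕ} (f : (Fin n → Bool) → Bool) (j : Fin n) : Prop :=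
  ∃ x : Fin n → Bool,
    f (Function.update x j true) ≠ f (Function.update x j false)

/-- `x^{a>b}` vector of a profile: voter `i`'s pairwise preference of `a` over `b`. -/
def pairVec {n : ℕ} (a b : Fin 3) (σ : Fin n → Equiv.Perm (Fin 3)) : Fin n → Bool :=
  fun i => decide (σ i a < σ i b)

lemma realize : ∀ u v w : Bool, (u ≠ v ∨ v ≠ w) →
    ∃ π : Equiv.Perm (Fin 3),
      decide (π 0 < π 1) = u ∧ decide (π 1 < π 2) = v ∧ decide (π 2 < π 0) = w := by
  decide

theorem stmt_5 (fab fbc fca : (Fin 2 → Bool) → Bool)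
    (hab : Pivotal fab 0) (hbc : Pivotal fbc 1) :
    ∃ σ : Fin 2 → Equiv.Perm (Fin 3),
      fab (pairVec 0 1 σ) = fbc (pairVec 1 2 σ) ∧
      fbc (pairVec 1 2 σ) = fca (pairVec 2 0 σ) := by
  obtain ⟨x, hx⟩ := hab
  obtain ⟨y, hy⟩ := hbc
  have ex0 : ∀ b : Bool, Function.update x 0 b = ![b, x 1] := by
    intro b; funext i; fin_cases i <;> simp [Function.update]
  have ey0 : ∀ b : Bool, Function.update y 1 b = ![y 0, b] := by
    intro b; funext i; fin_cases i <;> simp [Function.update]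
  rw [ex0, ex0] at hx
  rw [ey0, ey0] at hy
  set v : Bool := fca ![!(y 0), !(x 1)] with hv
  have hs : ∃ s : Bool, fab ![s, x 1] = v := by
    by_cases h : fab ![true, x 1] = v
    · exact ⟨true, h⟩
    · exact ⟨false, by revert h hx; cases v <;> cases hfa : fab ![true, x 1] <;>
        cases hfb : fab ![false, x 1] <;> simp_all⟩
  have ht : ∃ t : Bool, fbc ![y 0, t] = v := by
    by_cases h : fbc ![y 0, true] = v
    · exact ⟨true, h⟩
    · exact ⟨false, by revert h hy; cases v <;> cases hfa : fbc ![y 0, true] <;>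
        cases hfb : fbc ![y 0, false] <;> simp_all⟩
  obtain ⟨s, hs⟩ := hs
  obtain ⟨t, ht⟩ := ht
  obtain ⟨π0, h01, h02, h03⟩ := realize s (y 0) (!(y 0)) (Or.inr (by cases y 0 <;> simp))
  obtain ⟨π1, h11, h12, h13⟩ := realize (x 1) t (!(x 1)) (by cases x 1 <;> cases t <;> simp)
  refine ⟨![π0, π1], ?_⟩
  have e1 : pairVec 0 1 ![π0, π1] = ![s, x 1] := by
    funext i; fin_cases i <;> simp [pairVec, h01, h11] <;> assumption
  have e2 : pairVec 1 2 ![π0, π1] = ![y 0, t] := by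
    funext i; fin_cases i <;> simp [pairVec, h02, h12] <;> assumption
  have e3 : pairVec 2 0 ![π0, π1] = ![!(y 0), !(x 1)] := by
    funext i; fin_cases i <;> simp [pairVec, h03, h13] <;> assumption
  rw [e1, e2, e3, hs, ht]
  exact ⟨rfl, rfl⟩
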